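/- Let N ≥ 5, A, B > 0, ε > 0, and λ₀ = ((N-2)A/(2B))^{1/(N-4)} ε^{-1/(N-4)}. Then there exists c₀ > 0 depending only on N and on upper and lower bounds for A, B, such that for f(λ) = A λ^{2-N} - B ε λ^{-2}: if (A/B)^{1/(N-4)} ε^{-1/(N-4)} λ^{-1} ≤ 2 (2/(N-2))^{1/(N-4)} then f(λ) - f(λ₀) ≥ c₀ ε (λ^{-1} - λ₀^{-1})², and otherwise f(λ) - f(λ₀) ≥ c₀ ε^{(N-2)/(N-4)}. -/

import Mathlib

open Real Finset

lemma core_ineq (n : ℕ) (hn : 3 ≤ n) (s : ℝ) (hs : 0 ≤ s) :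
    ((n:ℝ) - 2) * (s - 1)^2 ≤ 2*(s^n - 1) - (n:ℝ)*(s^2 - 1) := by
  have hn3 : (3:ℝ) ≤ n := by exact_mod_cast hn
  have hgeom : (∑ i ∈ range n, s ^ i) * (s - 1) = s ^ n - 1 := geom_sum_mul s n
  rcases le_total 1 s with h1 | h1
  · -- s ≥ 1
    have hgauss : (∑ k ∈ range n, (k:ℝ)) = (n:ℝ)*((n:ℝ)-1)/2 := by
      have h := Finset.sum_range_id_mul_two n
      have h2 : ((∑ i ∈ range n, i : ℕ) : ℝ) * 2 = (n:ℝ) * ((n:ℝ) - 1) := by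
        rw [← Nat.cast_ofNat, ← Nat.cast_mul, h, Nat.cast_mul, Nat.cast_sub (by omega : 1 ≤ n)]
        push_cast; ring
      push_cast at h2
      linarith
    have hsum : (n:ℝ) + ((n:ℝ)*((n:ℝ)-1)/2)*(s-1) ≤ ∑ k ∈ range n, s^k := by
      have hterm : ∀ k ∈ range n, 1 + (k:ℝ)*(s-1) ≤ s^k := by
        intro k _
        have := one_add_mul_le_pow (by linarith : (-2:ℝ) ≤ s - 1) k
        calc 1 + (k:ℝ)*(s-1) = 1 + (k:ℝ)*(s-1) := rfl
          _ ≤ (1 + (s-1))^k := by simpa [mul_comm] using this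
          _ = s^k := by ring_nf
      calc (n:ℝ) + ((n:ℝ)*((n:ℝ)-1)/2)*(s-1) = ∑ k ∈ range n, (1 + (k:ℝ)*(s-1)) := by
            rw [Finset.sum_add_distrib, Finset.sum_const, ← Finset.sum_mul, hgauss]
            simp only [smul_eq_mul, mul_one, Finset.card_range, nsmul_eq_mul]
        _ ≤ ∑ k ∈ range n, s^k := Finset.sum_le_sum hterm
    have h2 := mul_le_mul_of_nonneg_right hsum (by linarith : (0:ℝ) ≤ s - 1)
    nlinarith [sq_nonneg (s-1), mul_nonneg (mul_nonneg (by linarith : (0:ℝ) ≤ (n:ℝ)-3) (sq_nonneg (s-1))) (by linarith : (0:ℝ) ≤ (n:ℝ))]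
  · -- s ≤ 1
    obtain ⟨p, rfl⟩ : ∃ p, n = p + 1 := ⟨n - 1, by omega⟩
    have hsum : (∑ k ∈ range (p+1), s^k) ≤ 1 + (p:ℝ)*s := by
      rw [Finset.sum_range_succ']
      have : ∀ k ∈ range p, s^(k+1) ≤ s := by
        intro k _
        calc s^(k+1) = s * s^k := by ring
          _ ≤ s * 1 := by
            apply mul_le_mul_of_nonneg_left _ hs
            exact pow_le_one₀ hs h1
          _ = s := by ring
      have := Finset.sum_le_sum this
      simp only [Finset.sum_const, smul_eq_mul, nsmul_eq_mul, Finset.card_range] at this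
      simp only [pow_zero]
      linarith
    have h2 := mul_le_mul_of_nonneg_right hsum (by linarith : (0:ℝ) ≤ 1 - s)
    push_cast
    nlinarith [hgeom, h2, sq_nonneg (1-s), mul_nonneg (mul_nonneg hs (by linarith : (0:ℝ) ≤ 1-s)) (by push_cast at hn3; linarith : (0:ℝ) ≤ ((p:ℝ)+1)-3)]

lemma rpow_neg_nat (x : ℝ) (hx : 0 < x) (k : ℕ) : x ^ (-(k:ℝ)) = (x⁻¹)^k := by
  rw [Real.rpow_neg hx.le, Real.rpow_natCast, ← inv_pow]

lemma sq_rpow (x : ℝ) (hx : 0 < x) (a : ℝ) : (x^a)^2 = x^(2*a) := by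
  rw [← Real.rpow_natCast (x^a) 2, ← Real.rpow_mul hx.le]
  norm_num [mul_comm]

set_option maxHeartbeats 1000000 in
theorem stmt_7 (N : ℕ) (hN : 5 ≤ N) (m M : ℝ) (hm : 0 < m) (hmM : m ≤ M) :
    ∃ c₀ > 0, ∀ A B ε lam : ℝ, m ≤ A → A ≤ M → m ≤ B → B ≤ M → 0 < ε → 0 < lam →
      ∀ lam0 : ℝ,
        lam0 = (((N : ℝ) - 2) * A / (2 * B)) ^ (1 / ((N : ℝ) - 4)) * ε ^ (-1 / ((N : ℝ) - 4)) →
        ((A / B) ^ (1 / ((N : ℝ) - 4)) * ε ^ (-1 / ((N : ℝ) - 4)) * lam⁻¹ ≤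
            2 * (2 / ((N : ℝ) - 2)) ^ (1 / ((N : ℝ) - 4)) →
          c₀ * ε * (lam⁻¹ - lam0⁻¹) ^ 2 ≤
            (A * lam ^ ((2 : ℝ) - N) - B * ε * lam ^ (-2 : ℝ)) -
              (A * lam0 ^ ((2 : ℝ) - N) - B * ε * lam0 ^ (-2 : ℝ))) ∧
        (2 * (2 / ((N : ℝ) - 2)) ^ (1 / ((N : ℝ) - 4)) <
            (A / B) ^ (1 / ((N : ℝ) - 4)) * ε ^ (-1 / ((N : ℝ) - 4)) * lam⁻¹ →
          c₀ * ε ^ (((N : ℝ) - 2) / ((N : ℝ) - 4)) ≤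
            (A * lam ^ ((2 : ℝ) - N) - B * ε * lam ^ (-2 : ℝ)) -
              (A * lam0 ^ ((2 : ℝ) - N) - B * ε * lam0 ^ (-2 : ℝ))) := by
  have hN5 : (5:ℝ) ≤ (N:ℝ) := by exact_mod_cast hN
  have hN2 : (0:ℝ) < (N:ℝ) - 2 := by linarith
  have hN4 : (0:ℝ) < (N:ℝ) - 4 := by linarith
  set x : ℝ := min 1 (2*m/(((N:ℝ)-2)*M)) with hxdef
  have hMpos : 0 < M := lt_of_lt_of_le hm hmM
  have hx0 : 0 < x := lt_min one_pos (by positivity)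
  have hx1 : x ≤ 1 := min_le_left _ _
  refine ⟨m * x^2 / 3, by positivity, ?_⟩
  intro A B ε lam hmA hAM hmB hBM hε hlam lam0 hlam0
  have hA : 0 < A := lt_of_lt_of_le hm hmA
  have hB : 0 < B := lt_of_lt_of_le hm hmB
  have hC : 0 < ((N:ℝ)-2)*A/(2*B) := by positivity
  have hlam0pos : 0 < lam0 := by
    rw [hlam0]; positivity
  set K : ℝ := (((N:ℝ)-2)*A/(2*B))⁻¹ with hKdef
  have hK : 0 < K := by positivity
  have hconv : ∀ y : ℝ, 0 < y →
      A * y ^ ((2:ℝ) - N) - B*ε*y^(-2:ℝ) = A * (y⁻¹)^(N-2:ℕ) - B*ε*(y⁻¹)^2 := by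
    intro y hy
    have h1 : y ^ ((2:ℝ)-N) = (y⁻¹)^(N-2:ℕ) := by
      rw [show (2:ℝ) - N = -(((N-2:ℕ):ℝ)) by
        rw [Nat.cast_sub (by omega : 2 ≤ N)]; push_cast; ring]
      exact rpow_neg_nat y hy (N-2)
    have h2 : y ^ (-2:ℝ) = (y⁻¹)^2 := by
      rw [show (-2:ℝ) = -((2:ℕ):ℝ) by norm_num]
      exact rpow_neg_nat y hy 2
    rw [h1, h2]
  set t : ℝ := lam⁻¹ with htdef
  set t0 : ℝ := lam0⁻¹ with ht0def
  have htp : 0 < t := by positivity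
  have ht0p : 0 < t0 := by positivity
  have ht0 : t0 = (K*ε)^(1/((N:ℝ)-4)) := by
    rw [ht0def, hlam0, mul_inv, ← Real.inv_rpow hC.le,
      show (-1:ℝ)/((N:ℝ)-4) = -(1/((N:ℝ)-4)) by ring, Real.rpow_neg hε.le, inv_inv,
      ← Real.mul_rpow hK.le hε.le]
  have hpow : t0 ^ (N-4:ℕ) = K * ε := by
    rw [ht0, ← Real.rpow_natCast ((K*ε)^(1/((N:ℝ)-4))) (N-4), ← Real.rpow_mul (by positivity),
      show (1/((N:ℝ)-4)) * ((N-4:ℕ):ℝ) = 1 by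
        rw [Nat.cast_sub (by omega : 4 ≤ N)]; push_cast; field_simp,
      Real.rpow_one]
  have hA0 : ((N:ℝ)-2) * (A * t0 ^ (N-4:ℕ)) = 2*B*ε := by
    rw [hpow, hKdef]; field_simp
  have hAu : ((N:ℝ)-2) * (A * t0^(N-2:ℕ)) = 2*B*ε*t0^2 := by
    rw [show N-2 = (N-4)+2 from by omega, pow_add]
    linear_combination t0^2 * hA0
  -- main estimate
  have hmain : ((N:ℝ)-4) * (B*ε) * (t - t0)^2 ≤
      ((N:ℝ)-2) * ((A * t^(N-2:ℕ) - B*ε*t^2) - (A*t0^(N-2:ℕ) - B*ε*t0^2)) := by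
    set s : ℝ := t / t0 with hsdef
    have hts : t = s * t0 := by rw [hsdef, div_mul_cancel₀ _ ht0p.ne']
    have hs : 0 ≤ s := by positivity
    have hL := core_ineq (N-2) (by omega) s hs
    rw [Nat.cast_sub (by omega : 2 ≤ N)] at hL
    push_cast at hL
    have hL' : ((N:ℝ)-4)*(s-1)^2 ≤ 2*(s^(N-2:ℕ) - 1) - ((N:ℝ)-2)*(s^2-1) := by
      have e : (N:ℝ) - 2 - 2 = (N:ℝ) - 4 := by ring
      linarith [hL]
    have e1 : ((N:ℝ)-2) * ((A * t^(N-2:ℕ) - B*ε*t^2) - (A*t0^(N-2:ℕ) - B*ε*t0^2)) =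
        (B*ε*t0^2) * (2*(s^(N-2:ℕ) - 1) - ((N:ℝ)-2)*(s^2-1)) := by
      rw [hts]
      simp only [mul_pow]
      linear_combination (s^(N-2:ℕ) - 1) * hAu
    have e2 : ((N:ℝ)-4)*(B*ε)*(t-t0)^2 = (B*ε*t0^2) * (((N:ℝ)-4)*(s-1)^2) := by
      rw [hts]; ring
    rw [e1, e2]
    exact mul_le_mul_of_nonneg_left hL' (by positivity)
  have hcoef : ((N:ℝ)-2) * (m/3) ≤ ((N:ℝ)-4)*B := by nlinarith
  constructor
  · intro _
    rw [hconv lam hlam, hconv lam0 hlam0pos]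
    have step : ((N:ℝ)-2) * (m * x^2 / 3 * ε * (t-t0)^2) ≤ ((N:ℝ)-4)*(B*ε)*(t-t0)^2 := by
      have h1 : m * x^2 / 3 ≤ m / 3 := by
        nlinarith [mul_nonneg hm.le (mul_nonneg (by linarith : (0:ℝ) ≤ 1-x)
          (by linarith : (0:ℝ) ≤ 1+x))]
      have s2 := mul_le_mul_of_nonneg_right hcoef (mul_nonneg hε.le (sq_nonneg (t-t0)))
      have s1 := mul_le_mul_of_nonneg_right (mul_le_mul_of_nonneg_left h1 hN2.le)
        (mul_nonneg hε.le (sq_nonneg (t-t0)))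
      linarith [s1, s2]
    exact le_of_mul_le_mul_left (step.trans hmain) hN2
  · intro hcond
    rw [hconv lam hlam, hconv lam0 hlam0pos]
    set Q : ℝ := (A/B)^(1/((N:ℝ)-4)) * ε^(-1/((N:ℝ)-4)) with hQdef
    have hQpos : 0 < Q := by
      rw [hQdef]; positivity
    have hQt0 : Q * t0 = (2/((N:ℝ)-2))^(1/((N:ℝ)-4)) := by
      rw [hQdef, ht0, Real.mul_rpow hK.le hε.le]
      have e : ε^(-1/((N:ℝ)-4)) * ε^(1/((N:ℝ)-4)) = 1 := by
        rw [← Real.rpow_add hε, show -1/((N:ℝ)-4) + 1/((N:ℝ)-4) = 0 by ring, Real.rpow_zero]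
      have e2 : (A/B)^(1/((N:ℝ)-4)) * K^(1/((N:ℝ)-4)) = (2/((N:ℝ)-2))^(1/((N:ℝ)-4)) := by
        rw [← Real.mul_rpow (by positivity) hK.le]
        congr 1
        rw [hKdef]
        field_simp
      calc (A/B)^(1/((N:ℝ)-4)) * ε^(-1/((N:ℝ)-4)) * (K^(1/((N:ℝ)-4)) * ε^(1/((N:ℝ)-4)))
          = ((A/B)^(1/((N:ℝ)-4)) * K^(1/((N:ℝ)-4))) * (ε^(-1/((N:ℝ)-4)) * ε^(1/((N:ℝ)-4))) := by ring
        _ = (2/((N:ℝ)-2))^(1/((N:ℝ)-4)) := by rw [e, e2, mul_one]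
    have hgt : 2 * t0 < t := by
      have : Q * (2 * t0) < Q * t := by
        rw [show Q * (2*t0) = 2 * (Q * t0) by ring, hQt0]
        exact hcond
      exact lt_of_mul_lt_mul_left this hQpos.le
    have hsq : t0^2 ≤ (t - t0)^2 := by nlinarith [mul_pos htp (by linarith : (0:ℝ) < t - 2*t0)]
    -- ε * t0^2 ≥ x^2 * ε^((N-2)/(N-4))
    have hxK : x ≤ K := by
      have h1 : 2*m/(((N:ℝ)-2)*M) ≤ 2*B/(((N:ℝ)-2)*A) :=
        div_le_div₀ (by positivity) (by linarith) (by positivity)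
          (by nlinarith)
      have h2 : K = 2*B/(((N:ℝ)-2)*A) := by rw [hKdef]; field_simp
      rw [h2]
      exact le_trans (min_le_right _ _) h1
    have p1 : t0^2 = K^(2/((N:ℝ)-4)) * ε^(2/((N:ℝ)-4)) := by
      rw [ht0, sq_rpow _ (by positivity), Real.mul_rpow hK.le hε.le]
      congr 2 <;> ring
    have p2 : ε * ε^(2/((N:ℝ)-4)) = ε^(((N:ℝ)-2)/((N:ℝ)-4)) := by
      nth_rewrite 1 [← Real.rpow_one ε]
      rw [← Real.rpow_add hε]
      congr 1
      field_simp
      ring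
    have hxk2 : x^2 ≤ K^(2/((N:ℝ)-4)) := by
      have a1 : x^((2:ℝ)) ≤ x^(2/((N:ℝ)-4)) := by
        apply Real.rpow_le_rpow_of_exponent_ge hx0 hx1
        rw [div_le_iff₀ hN4]; nlinarith
      have a2 : x^(2/((N:ℝ)-4)) ≤ K^(2/((N:ℝ)-4)) :=
        Real.rpow_le_rpow hx0.le hxK (by positivity)
      calc x^2 = x^((2:ℝ)) := by
            rw [show (2:ℝ) = ((2:ℕ):ℝ) by norm_num, Real.rpow_natCast]
        _ ≤ K^(2/((N:ℝ)-4)) := a1.trans a2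
    have hεt0 : x^2 * ε^(((N:ℝ)-2)/((N:ℝ)-4)) ≤ ε * t0^2 := by
      have : ε * t0^2 = K^(2/((N:ℝ)-4)) * ε^(((N:ℝ)-2)/((N:ℝ)-4)) := by
        rw [p1, ← p2]; ring
      rw [this]
      exact mul_le_mul_of_nonneg_right hxk2 (Real.rpow_nonneg hε.le _)
    have hq1 : x^2 * ε^(((N:ℝ)-2)/((N:ℝ)-4)) ≤ ε * (t - t0)^2 :=
      hεt0.trans (mul_le_mul_of_nonneg_left hsq hε.le)
    have step : ((N:ℝ)-2) * (m * x^2 / 3 * ε^(((N:ℝ)-2)/((N:ℝ)-4))) ≤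
        ((N:ℝ)-4)*(B*ε)*(t-t0)^2 := by
      have s1 := mul_le_mul_of_nonneg_left hq1 (by positivity : (0:ℝ) ≤ ((N:ℝ)-2) * m / 3)
      have s2 := mul_le_mul_of_nonneg_right hcoef
        (mul_nonneg hε.le (sq_nonneg (t-t0)))
      linarith [s1, s2]
    exact le_of_mul_le_mul_left (step.trans hmain) hN2
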